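/- Consider the system on X = ℝ² given by A(n)(x₁,x₂) = (c₁ a_n x₁, c₂ a_n x₂) with c₁ = e^{−3/2}, c₂ = e^{1/2}, where a_n = e^{−n} if n is even and a_n = e^{n+1} if n is odd, with projections P(n)(x₁,x₂) = (x₁,0). Then with N = e, α = 1/2 and β = 1 one has e^{α(m−n)}(‖𝒜_P(m,n)x‖ + ‖Q(n)x‖) ≤ N(e^{βn}‖P(n)x‖ + e^{βm}‖𝒜_Q(m,n)x‖) for all m ≥ n and all x ∈ ℝ²; in particular the system is P-exponentially dichotomic. -/

import Mathlib

open Real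

/-- The evolution operator started at time `n`, after `k` steps:
`A(n+k) ⋯ A(n+1)`. -/
noncomputable def evolFrom {X : Type*} [NormedAddCommGroup X] [NormedSpace ℝ X]
    (A : ℕ → X →L[ℝ] X) (n : ℕ) : ℕ → X →L[ℝ] X
  | 0 => 1
  | k + 1 => (A (n + k + 1)).comp (evolFrom A n k)

/-- The evolution operator `𝒜(m,n) = A(m) ⋯ A(n+1)` for `m ≥ n`, `𝒜(n,n) = I`. -/
noncomputable def evol {X : Type*} [NormedAddCommGroup X] [NormedSpace ℝ X]
    (A : ℕ → X →L[ℝ] X) (m n : ℕ) : X →L[ℝ] X :=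
  evolFrom A n (m - n)

/-- `𝒜_P(m,n) = 𝒜(m,n) P(n)`. -/
noncomputable def evolP {X : Type*} [NormedAddCommGroup X] [NormedSpace ℝ X]
    (A P : ℕ → X →L[ℝ] X) (m n : ℕ) : X →L[ℝ] X :=
  (evol A m n).comp (P n)

/-- `𝒜_Q(m,n) = 𝒜(m,n) Q(n)` where `Q(n) = I - P(n)`. -/
noncomputable def evolQ {X : Type*} [NormedAddCommGroup X] [NormedSpace ℝ X]
    (A P : ℕ → X →L[ℝ] X) (m n : ℕ) : X →L[ℝ] X :=
  (evol A m n).comp (1 - P n)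

/-- The system is P-exponentially dichotomic. -/
def IsED {X : Type*} [NormedAddCommGroup X] [NormedSpace ℝ X]
    (A P : ℕ → X →L[ℝ] X) : Prop :=
  ∃ N α β : ℝ, 1 ≤ N ∧ 0 < α ∧ 0 ≤ β ∧
    ∀ m n : ℕ, n ≤ m → ∀ x : X,
      exp (α * ((m : ℝ) - n)) * (‖evolP A P m n x‖ + ‖(1 - P n) x‖) ≤
        N * (exp (β * n) * ‖P n x‖ + exp (β * m) * ‖evolQ A P m n x‖)

/-- The diagonal operator `(x₁, x₂) ↦ (u x₁, v x₂)` on `ℝ²`. -/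
noncomputable def diagCLM (u v : ℝ) : ℝ × ℝ →L[ℝ] ℝ × ℝ :=
  (u • ContinuousLinearMap.fst ℝ ℝ ℝ).prod (v • ContinuousLinearMap.snd ℝ ℝ ℝ)

/-- The family of projections `P(n)(x₁, x₂) = (x₁, 0)` on `ℝ²`. -/
noncomputable def projFst : ℕ → (ℝ × ℝ →L[ℝ] ℝ × ℝ) :=
  fun _ => (ContinuousLinearMap.fst ℝ ℝ ℝ).prod 0


noncomputable def sfun : ℕ → ℝ := fun j => if Even j then -(j:ℝ) else (j:ℝ)+1
noncomputable def Tfun : ℕ → ℝ := fun j => if Even j then 0 else (j:ℝ)+1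

lemma Tstep (j : ℕ) : Tfun (j+1) = Tfun j + sfun (j+1) := by
  rcases Nat.even_or_odd j with h | h
  · have h1 : ¬ Even (j+1) := by simpa [Nat.even_add_one] using h
    simp only [Tfun, sfun, if_neg h1, if_pos h]
    push_cast; ring
  · have h0 : ¬ Even j := Nat.not_even_iff_odd.mpr h
    have h1 : Even (j+1) := Nat.even_add_one.mpr h0
    simp only [Tfun, sfun, if_pos h1, if_neg h0]
    push_cast; ring

lemma Tnonneg (j : ℕ) : 0 ≤ Tfun j := by
  unfold Tfun; split_ifs <;> positivity

lemma Tle (j : ℕ) : Tfun j ≤ (j:ℝ)+1 := by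
  unfold Tfun; split_ifs
  · positivity
  · exact le_rfl

lemma diagCLM_apply (u v : ℝ) (x : ℝ × ℝ) : diagCLM u v x = (u * x.1, v * x.2) := by
  simp [diagCLM]

lemma ha_exp (a : ℕ → ℝ)
    (ha : ∀ n, a n = if Even n then exp (-(n : ℝ)) else exp ((n : ℝ) + 1)) (j : ℕ) :
    a j = exp (sfun j) := by
  rw [ha j]; unfold sfun; split_ifs <;> rfl

lemma evolFrom_apply (a : ℕ → ℝ)
    (ha : ∀ n, a n = if Even n then exp (-(n : ℝ)) else exp ((n : ℝ) + 1))
    (A : ℕ → ℝ × ℝ →L[ℝ] ℝ × ℝ)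
    (hA : ∀ n, A n = diagCLM (exp (-(3 / 2)) * a n) (exp (1 / 2) * a n))
    (n : ℕ) : ∀ (k : ℕ) (x : ℝ × ℝ),
    evolFrom A n k x =
      (exp (-(3/2)*k + (Tfun (n+k) - Tfun n)) * x.1,
       exp ((1/2)*k + (Tfun (n+k) - Tfun n)) * x.2) := by
  intro k
  induction k with
  | zero => intro x; simp [evolFrom]
  | succ k ih =>
    intro x
    show (A (n + k + 1)) (evolFrom A n k x) = _
    rw [ih, hA, ha_exp a ha, diagCLM_apply]
    refine Prod.ext ?_ ?_ <;> simp only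
    · rw [show n + (k+1) = (n+k)+1 from rfl, Tstep (n+k),
        ← Real.exp_add, ← mul_assoc, ← Real.exp_add]
      congr 2
      push_cast; ring
    · rw [show n + (k+1) = (n+k)+1 from rfl, Tstep (n+k),
        ← Real.exp_add, ← mul_assoc, ← Real.exp_add]
      congr 2
      push_cast; ring


/-- Example: with `c₁ = e^{-3/2}`, `c₂ = e^{1/2}`, the system is
P-exponentially dichotomic, with `N = e`, `α = 1/2`, `β = 1`. -/
theorem example_exponential_dichotomy
    (a : ℕ → ℝ)
    (ha : ∀ n, a n = if Even n then exp (-(n : ℝ)) else exp ((n : ℝ) + 1))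
    (A : ℕ → ℝ × ℝ →L[ℝ] ℝ × ℝ)
    (hA : ∀ n, A n = diagCLM (exp (-(3 / 2)) * a n) (exp (1 / 2) * a n)) :
    (∀ m n : ℕ, n ≤ m → ∀ x : ℝ × ℝ,
      exp ((1 / 2) * ((m : ℝ) - n)) * (‖evolP A projFst m n x‖ + ‖(1 - projFst n) x‖) ≤
        exp 1 * (exp (1 * (n : ℝ)) * ‖projFst n x‖ +
          exp (1 * (m : ℝ)) * ‖evolQ A projFst m n x‖)) ∧
    IsED A projFst := by
  have key : ∀ m n : ℕ, n ≤ m → ∀ x : ℝ × ℝ,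
      exp ((1 / 2) * ((m : ℝ) - n)) * (‖evolP A projFst m n x‖ + ‖(1 - projFst n) x‖) ≤
        exp 1 * (exp (1 * (n : ℝ)) * ‖projFst n x‖ +
          exp (1 * (m : ℝ)) * ‖evolQ A projFst m n x‖) := by
    intro m n hnm x
    obtain ⟨k, rfl⟩ := Nat.exists_eq_add_of_le hnm
    have hP : projFst n x = (x.1, 0) := by simp [projFst]
    have hQ : (1 - projFst n) x = (0, x.2) := by
      simp [projFst, ContinuousLinearMap.sub_apply, Prod.ext_iff]
    have hk : n + k - n = k := by omega
    set D : ℝ := Tfun (n+k) - Tfun n with hD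
    have h1 : evolP A projFst (n+k) n x = (exp (-(3/2)*k + D) * x.1, 0) := by
      rw [evolP]
      simp only [ContinuousLinearMap.comp_apply]
      rw [hP, evol, hk, evolFrom_apply a ha A hA]
      simp
      exact Or.inl rfl
    have h2 : evolQ A projFst (n+k) n x = (0, exp ((1/2)*k + D) * x.2) := by
      rw [evolQ]
      simp only [ContinuousLinearMap.comp_apply]
      rw [hQ, evol, hk, evolFrom_apply a ha A hA]
      simp
      exact Or.inl rfl
    rw [h1, h2, hP, hQ]
    have n1 : ‖((exp (-(3/2)*(k:ℝ) + D) * x.1, (0:ℝ)) : ℝ × ℝ)‖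
        = exp (-(3/2)*(k:ℝ) + D) * |x.1| := by
      simp only [Prod.norm_def, norm_zero, Real.norm_eq_abs, abs_mul, abs_exp]
      exact max_eq_left (by positivity)
    have n2 : ‖(((0:ℝ), x.2) : ℝ × ℝ)‖ = |x.2| := by
      simp only [Prod.norm_def, norm_zero, Real.norm_eq_abs]
      exact max_eq_right (abs_nonneg _)
    have n3 : ‖((x.1, (0:ℝ)) : ℝ × ℝ)‖ = |x.1| := by
      simp only [Prod.norm_def, norm_zero, Real.norm_eq_abs]
      exact max_eq_left (abs_nonneg _)
    have n4 : ‖(((0:ℝ), exp ((1/2)*(k:ℝ) + D) * x.2) : ℝ × ℝ)‖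
        = exp ((1/2)*(k:ℝ) + D) * |x.2| := by
      simp only [Prod.norm_def, norm_zero, Real.norm_eq_abs, abs_mul, abs_exp]
      exact max_eq_right (by positivity)
    rw [n1, n2, n3, n4]
    have hc : ((n+k : ℕ):ℝ) - (n:ℝ) = (k:ℝ) := by push_cast; ring
    rw [hc]
    have hD1 : D ≤ (n:ℝ) + (k:ℝ) + 1 := by
      have := Tle (n+k); have := Tnonneg n
      rw [hD]; push_cast at *; linarith
    have hD2 : -((n:ℝ) + (k:ℝ) + 1) ≤ D := by
      have := Tnonneg (n+k); have := Tle n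
      rw [hD]; push_cast at *; linarith
    have e1 : exp ((1/2)*(k:ℝ)) * exp (-(3/2)*(k:ℝ) + D) ≤ exp 1 * exp (1*(n:ℝ)) := by
      rw [← Real.exp_add, ← Real.exp_add]
      exact Real.exp_le_exp.mpr (by linarith)
    have e2 : exp ((1/2)*(k:ℝ)) ≤ exp 1 * (exp (1*((n:ℝ)+(k:ℝ))) * exp ((1/2)*(k:ℝ) + D)) := by
      rw [← Real.exp_add, ← Real.exp_add]
      exact Real.exp_le_exp.mpr (by linarith)
    push_cast
    nlinarith [mul_le_mul_of_nonneg_right e1 (abs_nonneg x.1),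
      mul_le_mul_of_nonneg_right e2 (abs_nonneg x.2), abs_nonneg x.1, abs_nonneg x.2]
  refine ⟨key, exp 1, 1/2, 1, ?_, by norm_num, by norm_num, key⟩
  have := Real.add_one_le_exp (1:ℝ)
  linarith
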